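/- Let (S,Y) be a tree decomposition of a graph G_root, and let G_root be obtained from a graph G*_root by the following reverse operation: G*_root contains additional vertices X, and G_root is the graph on V(G*_root) ∖ X where two vertices are adjacent if they are adjacent in G*_root or have a common neighbor in X (where vertices of X form an independent set and each has its neighborhood in V(G*_root)∖X). Define Y'(s) to be Y(s) with each x ∈ X ∩ Y(s) replaced by N_{G*_root}(x). Then (S,Y') is a tree decomposition of G_root, and if every vertex of X has degree at most α in G*_root, then every bag and every adhesion of (S,Y') is at most α times the corresponding bag/adhesion of (S,Y). -/

import Mathlib

/-- `(tG, bag)` is a tree decomposition of `G`: `tG` is a tree, bags cover all vertices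
and edges, and for every vertex the set of nodes whose bag contains it is connected in `tG`
(expressed via a walk all of whose vertices' bags contain it). -/
def IsTreeDecomp {V T : Type*} (G : SimpleGraph V) (tG : SimpleGraph T)
    (bag : T → Set V) : Prop :=
  tG.IsTree ∧
  (∀ v, ∃ t, v ∈ bag t) ∧
  (∀ u v, G.Adj u v → ∃ t, u ∈ bag t ∧ v ∈ bag t) ∧
  (∀ v t₁ t₂, v ∈ bag t₁ → v ∈ bag t₂ →
    ∃ p : tG.Walk t₁ t₂, ∀ t ∈ p.support, v ∈ bag t)

/-- In a tree, every walk between the endpoints of an edge uses that edge. -/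
lemma tree_edge_mem_walk_edges {S : Type*} {tS : SimpleGraph S} (ht : tS.IsTree)
    {s₁ s₂ : S} (hadj : tS.Adj s₁ s₂) (W : tS.Walk s₁ s₂) : s(s₁, s₂) ∈ W.edges := by
  by_contra h
  have hb := SimpleGraph.isAcyclic_iff_forall_adj_isBridge.mp ht.IsAcyclic hadj
  rw [SimpleGraph.isBridge_iff] at hb
  exact hb (SimpleGraph.reachable_delete_edges_iff_exists_walk.mpr ⟨W, h⟩)

lemma biUnion_ncard_le {V W : Type*} [Fintype W] {I : Set V} (hI : I.Finite)
    (F : V → Set W) {α : ℕ} (h : ∀ y ∈ I, (F y).ncard ≤ α) :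
    (⋃ y ∈ I, F y).ncard ≤ α * I.ncard := by
  classical
  revert h
  refine Set.Finite.induction_on I hI (fun _ => by simp) ?_
  intro a s ha hs ih h
  rw [Set.biUnion_insert, Set.ncard_insert_of_notMem ha hs, mul_add, mul_one, add_comm (α * _)]
  calc (F a ∪ ⋃ y ∈ s, F y).ncard ≤ (F a).ncard + (⋃ y ∈ s, F y).ncard :=
        Set.ncard_union_le _ _
    _ ≤ α + α * s.ncard := by
        exact add_le_add (h a (Set.mem_insert _ _))
          (ih fun y hy => h y (Set.mem_insert_of_mem _ hy))

/-- Replacing vertices of an independent set `X` (each of degree at most `α`) in the bags of a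
tree decomposition of `G*` by their neighborhoods yields a tree decomposition of the graph
`G_root` obtained from `G*` by deleting `X` and making the neighborhood of each `x ∈ X` a
clique; bags and adhesions grow by a factor at most `α`. -/
theorem bag_replacement_decomp {V S : Type*} [Fintype V] [Fintype S]
    (Gstar : SimpleGraph V) (X : Set V) (α : ℕ) (hα : 1 ≤ α)
    (hind : ∀ x ∈ X, ∀ y ∈ X, ¬ Gstar.Adj x y)
    (hdeg : ∀ x ∈ X, (Gstar.neighborSet x).ncard ≤ α)
    (tS : SimpleGraph S) (Y : S → Set V)
    (hdecomp : IsTreeDecomp Gstar tS Y) :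
    let Groot : SimpleGraph {v : V // v ∉ X} :=
      SimpleGraph.fromRel (fun u v =>
        Gstar.Adj ↑u ↑v ∨ ∃ x ∈ X, Gstar.Adj (↑u : V) x ∧ Gstar.Adj (↑v : V) x)
    let Y' : S → Set {v : V // v ∉ X} :=
      fun s => {v | (↑v ∈ Y s) ∨ ∃ x ∈ X ∩ Y s, Gstar.Adj (↑v : V) x}
    IsTreeDecomp Groot tS Y' ∧
      (∀ s, (Y' s).ncard ≤ α * (Y s).ncard) ∧
      (∀ s₁ s₂, tS.Adj s₁ s₂ → (Y' s₁ ∩ Y' s₂).ncard ≤ α * (Y s₁ ∩ Y s₂).ncard) := by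
  classical
  intro Groot Y'
  obtain ⟨htree, hvert, hedge, hconn⟩ := hdecomp
  -- The "replacement" sets
  set F : V → Set {v : V // v ∉ X} :=
    fun y => {v | (↑v : V) = y ∨ (y ∈ X ∧ Gstar.Adj ↑v y)} with hFdef
  have hF : ∀ y, (F y).ncard ≤ α := by
    intro y
    by_cases hy : y ∈ X
    · have hsub : Subtype.val '' F y ⊆ Gstar.neighborSet y := by
        rintro _ ⟨v, hv, rfl⟩
        rcases hv with hv | ⟨_, hv⟩
        · exact absurd (hv ▸ hy) v.2
        · exact hv.symm
      calc (F y).ncard = (Subtype.val '' F y).ncard :=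
            (Set.ncard_image_of_injective _ Subtype.val_injective).symm
        _ ≤ (Gstar.neighborSet y).ncard := Set.ncard_le_ncard hsub (Set.toFinite _)
        _ ≤ α := hdeg y hy
    · have hsub : F y ⊆ {(⟨y, hy⟩ : {v : V // v ∉ X})} := by
        rintro v (hv | ⟨hyX, _⟩)
        · exact Set.mem_singleton_iff.mpr (Subtype.ext hv)
        · exact absurd hyX hy
      calc (F y).ncard ≤ ({(⟨y, hy⟩ : {v : V // v ∉ X})} : Set _).ncard :=
            Set.ncard_le_ncard hsub (Set.toFinite _)
        _ = 1 := Set.ncard_singleton _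
        _ ≤ α := hα
  have hFY' : ∀ (v : {v : V // v ∉ X}) (s : S) (y : V), v ∈ F y → y ∈ Y s → v ∈ Y' s := by
    rintro v s y (hv | ⟨hyX, hadj⟩) hys
    · exact Or.inl (hv ▸ hys)
    · exact Or.inr ⟨y, ⟨hyX, hys⟩, hadj⟩
  -- anchor: from membership in `Y' s` produce a witness `y` and a walk towards a bag containing v
  have anchor : ∀ (v : {v : V // v ∉ X}) (s : S), v ∈ Y' s →
      ∃ (y : V) (t : S) (p : tS.Walk s t),
        v ∈ F y ∧ y ∈ Y s ∧ (∀ u ∈ p.support, y ∈ Y u) ∧ (↑v : V) ∈ Y t := by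
    intro v s hv
    rcases hv with hv | ⟨x, ⟨hxX, hxY⟩, hadj⟩
    · exact ⟨↑v, s, SimpleGraph.Walk.nil, Or.inl rfl, hv,
        by intro u hu; simp only [SimpleGraph.Walk.support_nil, List.mem_singleton] at hu;
           exact hu ▸ hv, hv⟩
    · obtain ⟨t, hvt, hxt⟩ := hedge (↑v) x hadj
      obtain ⟨p, hp⟩ := hconn x s t hxY hxt
      exact ⟨x, t, p, Or.inr ⟨hxX, hadj⟩, hxY, hp, hvt⟩
  refine ⟨⟨htree, ?_, ?_, ?_⟩, ?_, ?_⟩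
  · -- vertex coverage
    intro v
    obtain ⟨t, ht⟩ := hvert ↑v
    exact ⟨t, Or.inl ht⟩
  · -- edge coverage
    intro u v huv
    rw [SimpleGraph.fromRel_adj] at huv
    obtain ⟨hne, h | h⟩ := huv
    · rcases h with h | ⟨x, hxX, hux, hvx⟩
      · obtain ⟨t, hut, hvt⟩ := hedge _ _ h
        exact ⟨t, Or.inl hut, Or.inl hvt⟩
      · obtain ⟨t, hut, hxt⟩ := hedge _ _ hux
        exact ⟨t, Or.inl hut, Or.inr ⟨x, ⟨hxX, hxt⟩, hvx⟩⟩
    · rcases h with h | ⟨x, hxX, hvx, hux⟩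
      · obtain ⟨t, hvt, hut⟩ := hedge _ _ h
        exact ⟨t, Or.inl hut, Or.inl hvt⟩
      · obtain ⟨t, hvt, hxt⟩ := hedge _ _ hvx
        exact ⟨t, Or.inr ⟨x, ⟨hxX, hxt⟩, hux⟩, Or.inl hvt⟩
  · -- connectivity
    intro v t₁ t₂ h₁ h₂
    obtain ⟨y₁, a₁, p₁, hvF₁, _, hp₁, hva₁⟩ := anchor v t₁ h₁
    obtain ⟨y₂, a₂, p₂, hvF₂, _, hp₂, hva₂⟩ := anchor v t₂ h₂
    obtain ⟨q, hq⟩ := hconn (↑v) a₁ a₂ hva₁ hva₂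
    refine ⟨p₁.append (q.append p₂.reverse), ?_⟩
    intro t ht
    rw [SimpleGraph.Walk.mem_support_append_iff] at ht
    rcases ht with ht | ht
    · exact hFY' v t y₁ hvF₁ (hp₁ t ht)
    · rw [SimpleGraph.Walk.mem_support_append_iff] at ht
      rcases ht with ht | ht
      · exact Or.inl (hq t ht)
      · rw [SimpleGraph.Walk.support_reverse, List.mem_reverse] at ht
        exact hFY' v t y₂ hvF₂ (hp₂ t ht)
  · -- bag sizes
    intro s
    have hsub : Y' s ⊆ ⋃ y ∈ Y s, F y := by
      rintro v (hv | ⟨x, ⟨hxX, hxY⟩, hadj⟩)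
      · exact Set.mem_biUnion hv (Or.inl rfl)
      · exact Set.mem_biUnion hxY (Or.inr ⟨hxX, hadj⟩)
    calc (Y' s).ncard ≤ (⋃ y ∈ Y s, F y).ncard :=
          Set.ncard_le_ncard hsub (Set.toFinite _)
      _ ≤ α * (Y s).ncard := biUnion_ncard_le (Set.toFinite _) F (fun y _ => hF y)
  · -- adhesions
    intro s₁ s₂ hadj
    have hsub : Y' s₁ ∩ Y' s₂ ⊆ ⋃ y ∈ Y s₁ ∩ Y s₂, F y := by
      rintro v ⟨h₁, h₂⟩
      obtain ⟨y₁, a₁, p₁, hvF₁, hy₁, hp₁, hva₁⟩ := anchor v s₁ h₁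
      obtain ⟨y₂, a₂, p₂, hvF₂, hy₂, hp₂, hva₂⟩ := anchor v s₂ h₂
      obtain ⟨q, hq⟩ := hconn (↑v) a₁ a₂ hva₁ hva₂
      have hW := tree_edge_mem_walk_edges htree hadj (p₁.append (q.append p₂.reverse))
      rw [SimpleGraph.Walk.edges_append, List.mem_append,
        SimpleGraph.Walk.edges_append, List.mem_append] at hW
      rcases hW with hW | hW | hW
      · have hs₂ : s₂ ∈ p₁.support := p₁.snd_mem_support_of_mem_edges hW
        exact Set.mem_biUnion ⟨hy₁, hp₁ s₂ hs₂⟩ hvF₁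
      · have hs₁ : s₁ ∈ q.support := q.fst_mem_support_of_mem_edges hW
        have hs₂ : s₂ ∈ q.support := q.snd_mem_support_of_mem_edges hW
        exact Set.mem_biUnion ⟨hq s₁ hs₁, hq s₂ hs₂⟩ (Or.inl rfl)
      · rw [SimpleGraph.Walk.edges_reverse, List.mem_reverse] at hW
        have hs₁ : s₁ ∈ p₂.support := p₂.fst_mem_support_of_mem_edges hW
        exact Set.mem_biUnion ⟨hp₂ s₁ hs₁, hy₂⟩ hvF₂
    calc (Y' s₁ ∩ Y' s₂).ncard ≤ (⋃ y ∈ Y s₁ ∩ Y s₂, F y).ncard :=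
          Set.ncard_le_ncard hsub (Set.toFinite _)
      _ ≤ α * (Y s₁ ∩ Y s₂).ncard :=
          biUnion_ncard_le (Set.toFinite _) F (fun y _ => hF y)
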